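/- arXiv:math/0703825 — 2 statements merged into one kernel-verified Lean document; each statement's English description precedes it below -/
import Mathlib

section
/- Let a > 0 and c > 0, and let q(y) = (1/√(2πc))·(exp(-(y-a)²/(2c)) - exp(-(y+a)²/(2c))) for y > 0. Then ∫_{0}^{∞} y²·q(y) dy = (a² + c)·(2N(a/√c) - 1) + √(2c/π)·a·exp(-a²/(2c)), where N is the standard normal CDF. -/
open MeasureTheory Real Set Filter Topology

/-- The standard normal cumulative distribution function. -/
noncomputable def stdNormalCDF (t : ℝ) : ℝ :=
  ∫ u in Set.Iio t, (1 / Real.sqrt (2 * Real.pi)) * Real.exp (-u ^ 2 / 2)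

noncomputable def gpdf (u : ℝ) : ℝ := (1 / Real.sqrt (2 * Real.pi)) * Real.exp (-u ^ 2 / 2)

lemma gpdf_eq (u : ℝ) :
    gpdf u = (1 / Real.sqrt (2 * Real.pi)) * Real.exp (-(1/2 : ℝ) * u ^ 2) := by
  unfold gpdf; ring_nf

lemma gpdf_integrable : Integrable gpdf := by
  have h := (integrable_exp_neg_mul_sq (show (0:ℝ) < 1/2 by norm_num)).const_mul
    (1 / Real.sqrt (2 * Real.pi))
  exact h.congr (ae_of_all _ fun x => (gpdf_eq x).symm)

lemma gpdf_continuous : Continuous gpdf := by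
  unfold gpdf; continuity

lemma gpdf_total : ∫ u : ℝ, gpdf u = 1 := by
  simp_rw [gpdf_eq, integral_const_mul, integral_gaussian]
  rw [show Real.pi / (1/2) = 2 * Real.pi by ring]
  rw [one_div, inv_mul_cancel₀]
  positivity

lemma stdCDF_Iic (t : ℝ) : stdNormalCDF t = ∫ u in Iic t, gpdf u := by
  unfold stdNormalCDF gpdf
  exact setIntegral_congr_set Iio_ae_eq_Iic

lemma stdCDF_fun : stdNormalCDF = fun t => stdNormalCDF 0 + ∫ u in (0:ℝ)..t, gpdf u := by
  funext t
  rw [stdCDF_Iic, stdCDF_Iic, ← intervalIntegral.integral_Iic_sub_Iic gpdf_integrable.integrableOn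
    gpdf_integrable.integrableOn]
  ring

lemma hasDerivAt_stdCDF (t : ℝ) : HasDerivAt stdNormalCDF (gpdf t) t := by
  rw [stdCDF_fun]
  exact (intervalIntegral.integral_hasDerivAt_right
    gpdf_integrable.intervalIntegrable
    gpdf_continuous.aestronglyMeasurable.stronglyMeasurableAtFilter
    gpdf_continuous.continuousAt).const_add _

lemma tendsto_stdCDF : Tendsto stdNormalCDF atTop (𝓝 1) := by
  rw [stdCDF_fun]
  have h := (intervalIntegral_tendsto_integral_Ioi 0 gpdf_integrable.integrableOn
    tendsto_id).const_add (stdNormalCDF 0)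
  convert h using 2
  · rfl
  rw [stdCDF_Iic, intervalIntegral.integral_Iic_add_Ioi gpdf_integrable.integrableOn
    gpdf_integrable.integrableOn, gpdf_total]

lemma stdCDF_neg (t : ℝ) : stdNormalCDF (-t) = 1 - stdNormalCDF t := by
  have h1 : (∫ x in Ioi t, gpdf (-x)) = ∫ x in Iic (-t), gpdf x := integral_comp_neg_Ioi t gpdf
  have h2 : ∀ x : ℝ, gpdf (-x) = gpdf x := fun x => by unfold gpdf; rw [neg_pow]; ring_nf
  simp_rw [h2] at h1
  rw [stdCDF_Iic, ← h1]
  have h3 := intervalIntegral.integral_Iic_add_Ioi (b := t) gpdf_integrable.integrableOn gpdf_integrable.integrableOn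
  rw [gpdf_total] at h3
  rw [← stdCDF_Iic] at h3
  linarith

lemma integrable_sq_gauss {c : ℝ} (hc : 0 < c) :
    Integrable (fun u : ℝ => u ^ 2 * Real.exp (-(1/(2*c)) * u ^ 2)) := by
  have h := integrable_rpow_mul_exp_neg_mul_sq (show (0:ℝ) < 1/(2*c) by positivity)
    (show (-1:ℝ) < 2 by norm_num)
  refine h.congr (ae_of_all _ fun x => ?_)
  show x ^ (2:ℝ) * Real.exp (-(1/(2*c)) * x ^ 2) = x ^ 2 * Real.exp (-(1/(2*c)) * x ^ 2)
  rw [← Real.rpow_natCast x 2]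
  norm_num

lemma integrable_shift_sq (b : ℝ) {c : ℝ} (hc : 0 < c) :
    Integrable (fun y : ℝ => y ^ 2 * Real.exp (-(y - b) ^ 2 / (2 * c))) := by
  have i1 := integrable_sq_gauss hc
  have i2 := (integrable_mul_exp_neg_mul_sq (show (0:ℝ) < 1/(2*c) by positivity)).const_mul (2*b)
  have i3 := (integrable_exp_neg_mul_sq (show (0:ℝ) < 1/(2*c) by positivity)).const_mul (b^2)
  have base : Integrable (fun u : ℝ => (u + b) ^ 2 * Real.exp (-u ^ 2 / (2 * c))) := by
    refine ((i1.add i2).add i3).congr (ae_of_all _ fun x => ?_)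
    simp only [Pi.add_apply]
    rw [show -(1/(2*c)) * x ^ 2 = -x ^ 2 / (2*c) by ring]
    ring
  have := base.comp_sub_right b
  refine this.congr (ae_of_all _ fun x => ?_)
  simp only []
  ring_nf

lemma tendsto_gauss_exp {c : ℝ} (hc : 0 < c) :
    Tendsto (fun x : ℝ => Real.exp (-(1/(2*c)) * x ^ 2)) atTop (𝓝 0) := by
  have h := tendsto_rpow_abs_mul_exp_neg_mul_sq_cocompact
    (show (0:ℝ) < 1/(2*c) by positivity) 0
  have h2 := h.mono_left (show (atTop : Filter ℝ) ≤ cocompact ℝ by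
    rw [cocompact_eq_atBot_atTop]; exact le_sup_right)
  simpa using h2

lemma tendsto_gauss_mul {c : ℝ} (hc : 0 < c) :
    Tendsto (fun x : ℝ => x * Real.exp (-(1/(2*c)) * x ^ 2)) atTop (𝓝 0) := by
  have h := tendsto_rpow_abs_mul_exp_neg_mul_sq_cocompact
    (show (0:ℝ) < 1/(2*c) by positivity) 1
  have h2 := h.mono_left (show (atTop : Filter ℝ) ≤ cocompact ℝ by
    rw [cocompact_eq_atBot_atTop]; exact le_sup_right)
  refine h2.congr' ?_
  filter_upwards [eventually_ge_atTop (0:ℝ)] with x hx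
  rw [abs_of_nonneg hx, Real.rpow_one]

lemma tendsto_lin_gauss (b d : ℝ) {c : ℝ} (hc : 0 < c) :
    Tendsto (fun y : ℝ => (y + d) * Real.exp (-(y - b) ^ 2 / (2 * c))) atTop (𝓝 0) := by
  have key : Tendsto (fun x : ℝ => (x + (b + d)) * Real.exp (-(1/(2*c)) * x ^ 2)) atTop (𝓝 0) := by
    have := (tendsto_gauss_mul hc).add ((tendsto_gauss_exp hc).const_mul (b + d))
    simpa [add_mul] using this
  have comp := key.comp (tendsto_atTop_add_const_right atTop (-b) tendsto_id)
  refine comp.congr fun y => ?_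
  simp only [Function.comp_apply, id_eq]
  rw [show -(1/(2*c)) * (y + -b) ^ 2 = -(y - b) ^ 2 / (2 * c) by ring]
  ring_nf

theorem stopped_OU_second_moment (a c : ℝ) (ha : 0 < a) (hc : 0 < c) (q : ℝ → ℝ)
    (hq : q = fun y => (1 / Real.sqrt (2 * Real.pi * c)) *
      (Real.exp (-(y - a) ^ 2 / (2 * c)) - Real.exp (-(y + a) ^ 2 / (2 * c)))) :
    ∫ y in Set.Ioi (0 : ℝ), y ^ 2 * q y
      = (a ^ 2 + c) * (2 * stdNormalCDF (a / Real.sqrt c) - 1)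
        + Real.sqrt (2 * c / Real.pi) * a * Real.exp (-a ^ 2 / (2 * c)) := by
  have hs : 0 < Real.sqrt c := Real.sqrt_pos.mpr hc
  set s := Real.sqrt c with hs_def
  have hs2 : s ^ 2 = c := Real.sq_sqrt hc.le
  have hsqrt : Real.sqrt (2 * Real.pi * c) = Real.sqrt (2 * Real.pi) * s := by
    rw [hs_def, Real.sqrt_mul (by positivity)]
  have hπ : 0 < Real.sqrt (2 * Real.pi) := by positivity
  set k := c / Real.sqrt (2 * Real.pi * c) with hk_def
  set F : ℝ → ℝ := fun y =>
    (a ^ 2 + c) * (stdNormalCDF ((y - a) / s) - stdNormalCDF ((y + a) / s))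
      + k * ((y - a) * Real.exp (-(y + a) ^ 2 / (2 * c))
             - (y + a) * Real.exp (-(y - a) ^ 2 / (2 * c))) with hF
  have hderiv : ∀ y ∈ Ici (0:ℝ), HasDerivAt F (y ^ 2 * q y) y := by
    intro y _
    have h1 : HasDerivAt (fun y : ℝ => (y - a) / s) (1 / s) y := by
      simpa using ((hasDerivAt_id y).sub_const a).div_const s
    have h2 : HasDerivAt (fun y : ℝ => (y + a) / s) (1 / s) y := by
      simpa using ((hasDerivAt_id y).add_const a).div_const s
    have hΦ1 : HasDerivAt (fun y : ℝ => stdNormalCDF ((y - a) / s))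
        (gpdf ((y - a) / s) * (1 / s)) y := by
        have := (hasDerivAt_stdCDF ((y - a) / s)).comp y h1; exact this
    have hΦ2 : HasDerivAt (fun y : ℝ => stdNormalCDF ((y + a) / s))
        (gpdf ((y + a) / s) * (1 / s)) y := by
        have := (hasDerivAt_stdCDF ((y + a) / s)).comp y h2; exact this
    have hu1 : HasDerivAt (fun y : ℝ => -(y - a) ^ 2 / (2 * c)) (-(y - a) / c) y := by
      have := (((hasDerivAt_id y).sub_const a).pow 2).neg.div_const (2 * c)
      convert this using 1
      · rfl
      · rfl
      · rfl
      simp only [id]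
      ring
    have hu2 : HasDerivAt (fun y : ℝ => -(y + a) ^ 2 / (2 * c)) (-(y + a) / c) y := by
      have := (((hasDerivAt_id y).add_const a).pow 2).neg.div_const (2 * c)
      convert this using 1
      · rfl
      · rfl
      · rfl
      simp only [id]
      ring
    have he1 : HasDerivAt (fun y : ℝ => Real.exp (-(y - a) ^ 2 / (2 * c)))
        (Real.exp (-(y - a) ^ 2 / (2 * c)) * (-(y - a) / c)) y := hu1.exp
    have he2 : HasDerivAt (fun y : ℝ => Real.exp (-(y + a) ^ 2 / (2 * c)))
        (Real.exp (-(y + a) ^ 2 / (2 * c)) * (-(y + a) / c)) y := hu2.exp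
    have hm1 : HasDerivAt (fun y : ℝ => (y - a) * Real.exp (-(y + a) ^ 2 / (2 * c)))
        (1 * Real.exp (-(y + a) ^ 2 / (2 * c))
          + (y - a) * (Real.exp (-(y + a) ^ 2 / (2 * c)) * (-(y + a) / c))) y :=
      ((hasDerivAt_id y).sub_const a).mul he2
    have hm2 : HasDerivAt (fun y : ℝ => (y + a) * Real.exp (-(y - a) ^ 2 / (2 * c)))
        (1 * Real.exp (-(y - a) ^ 2 / (2 * c))
          + (y + a) * (Real.exp (-(y - a) ^ 2 / (2 * c)) * (-(y - a) / c))) y :=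
      ((hasDerivAt_id y).add_const a).mul he1
    have hD := ((hΦ1.sub hΦ2).const_mul (a ^ 2 + c)).add ((hm1.sub hm2).const_mul k)
    convert hD using 1
    · rfl
    · rfl
    · rfl
    have harg1 : -((y - a) / s) ^ 2 / 2 = -(y - a) ^ 2 / (2 * c) := by
      rw [div_pow, hs2]; ring
    have harg2 : -((y + a) / s) ^ 2 / 2 = -(y + a) ^ 2 / (2 * c) := by
      rw [div_pow, hs2]; ring
    simp only [gpdf, harg1, harg2, hq, hk_def, hsqrt]
    rw [← hs2]
    have hsne : s ≠ 0 := ne_of_gt hs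
    have hπne : Real.sqrt (2 * Real.pi) ≠ 0 := ne_of_gt hπ
    field_simp
    ring
  have hInt : Integrable (fun y : ℝ => y ^ 2 * q y) := by
    rw [hq]
    have i1 := (integrable_shift_sq a hc).const_mul (1 / Real.sqrt (2 * Real.pi * c))
    have i2 := (integrable_shift_sq (-a) hc).const_mul (1 / Real.sqrt (2 * Real.pi * c))
    refine (i1.sub i2).congr (ae_of_all _ fun y => ?_)
    simp only [Pi.sub_apply]
    rw [show y - -a = y + a by ring]
    ring
  have hT : Tendsto F atTop (𝓝 0) := by
    have hcomp1 : Tendsto (fun y : ℝ => (y - a) / s) atTop atTop := by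
      exact (tendsto_atTop_add_const_right atTop (-a) tendsto_id).atTop_div_const hs
    have hcomp2 : Tendsto (fun y : ℝ => (y + a) / s) atTop atTop :=
      (tendsto_atTop_add_const_right atTop a tendsto_id).atTop_div_const hs
    have t1 : Tendsto (fun y : ℝ => stdNormalCDF ((y - a) / s)) atTop (𝓝 1) := by
      have := tendsto_stdCDF.comp hcomp1
      exact this.congr fun y => rfl
    have t2 : Tendsto (fun y : ℝ => stdNormalCDF ((y + a) / s)) atTop (𝓝 1) :=
      (tendsto_stdCDF.comp hcomp2).congr fun y => rfl
    have e1 : Tendsto (fun y : ℝ => (y + a) * Real.exp (-(y - a) ^ 2 / (2 * c))) atTop (𝓝 0) :=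
      tendsto_lin_gauss a a hc
    have e2 : Tendsto (fun y : ℝ => (y - a) * Real.exp (-(y + a) ^ 2 / (2 * c))) atTop (𝓝 0) := by
      have := tendsto_lin_gauss (-a) (-a) hc
      refine this.congr fun y => ?_
      rw [show y + -a = y - a by ring, show y - -a = y + a by ring]
    have := ((t1.sub t2).const_mul (a ^ 2 + c)).add ((e2.sub e1).const_mul k)
    simpa using this
  have key := integral_Ioi_of_hasDerivAt_of_tendsto' hderiv hInt.integrableOn hT
  rw [key]
  have hΦneg := stdCDF_neg (a / s)
  have h2k : 2 * k = Real.sqrt (2 * c / Real.pi) := by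
    have hmul : Real.sqrt (2 * c / Real.pi) * Real.sqrt (2 * Real.pi * c) = 2 * c := by
      rw [← Real.sqrt_mul (by positivity),
        show 2 * c / Real.pi * (2 * Real.pi * c) = (2 * c) ^ 2 by
          field_simp,
        Real.sqrt_sq (by positivity)]
    have hne : Real.sqrt (2 * Real.pi * c) ≠ 0 := by positivity
    have h3 : Real.sqrt (2 * c / Real.pi) = 2 * c / Real.sqrt (2 * Real.pi * c) := by
      rw [eq_div_iff hne]; exact hmul
    rw [hk_def, h3]
    ring
  rw [hF]
  simp only
  rw [show (0 - a) / s = -(a / s) by ring, show (0 + a) / s = a / s by ring,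
    show -(0 + a) ^ 2 = -a ^ 2 by ring, show -(0 - a) ^ 2 = -a ^ 2 by ring, hΦneg]
  linear_combination (a * Real.exp (-a ^ 2 / (2 * c))) * h2k
end

section
/- Let μ, σ, Δ > 0 and h(x) = N((x+μΔ)/(σ√Δ)) - e^{-2μx/σ²}·N((-x+μΔ)/(σ√Δ)) for x ≥ 0. Then h(x) ∈ (0,1) for x > 0, h is strictly increasing on [0,∞), and h(x) → 1 as x → ∞. -/
open Real Filter

section aux
open MeasureTheory Set

noncomputable def phi (u : ℝ) : ℝ := (1 / Real.sqrt (2 * Real.pi)) * Real.exp (-u ^ 2 / 2)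

lemma stdNormalCDF_eq (t : ℝ) : stdNormalCDF t = ∫ u in Set.Iio t, phi u := rfl

lemma phi_pos (u : ℝ) : 0 < phi u := by
  unfold phi
  positivity

lemma phi_eq (u : ℝ) : phi u = (1 / Real.sqrt (2 * Real.pi)) * Real.exp (-(2⁻¹) * u ^ 2) := by
  unfold phi; ring_nf

lemma phi_integrable : Integrable phi := by
  have h := (integrable_exp_neg_mul_sq (b := (2⁻¹:ℝ)) (by norm_num)).const_mul
    (1 / Real.sqrt (2 * Real.pi))
  exact h.congr (by simp [Filter.EventuallyEq, phi_eq])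

lemma phi_integral : ∫ u, phi u = 1 := by
  simp only [phi_eq]
  rw [MeasureTheory.integral_const_mul, integral_gaussian]
  have h2 : Real.pi / (2⁻¹:ℝ) = 2 * Real.pi := by ring
  rw [h2, one_div, inv_mul_cancel₀]
  positivity

lemma setIntegral_phi_pos {s : Set ℝ} (hs : MeasurableSet s) (h0 : 0 < volume s) :
    0 < ∫ u in s, phi u := by
  rw [setIntegral_pos_iff_support_of_nonneg_ae
    (Filter.Eventually.of_forall fun u => (phi_pos u).le) phi_integrable.integrableOn]
  have : Function.support phi = Set.univ := by
    ext u; simp [Function.mem_support, (phi_pos u).ne']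
  rw [this, Set.univ_inter]
  exact h0

lemma stdNormalCDF_pos (t : ℝ) : 0 < stdNormalCDF t := by
  rw [stdNormalCDF_eq]
  exact setIntegral_phi_pos measurableSet_Iio (by simp [Real.volume_Iio])

lemma stdNormalCDF_lt_one (t : ℝ) : stdNormalCDF t < 1 := by
  have hadd := MeasureTheory.integral_add_compl (s := Set.Iio t) measurableSet_Iio phi_integrable
  rw [phi_integral, Set.compl_Iio] at hadd
  have hpos : 0 < ∫ u in Set.Ici t, phi u :=
    setIntegral_phi_pos measurableSet_Ici (by simp [Real.volume_Ici])
  rw [stdNormalCDF_eq]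
  linarith

lemma stdNormalCDF_strictMono : StrictMono stdNormalCDF := by
  intro s t hst
  have hsub := intervalIntegral.integral_Iic_sub_Iic (μ := volume) (f := phi)
    phi_integrable.integrableOn phi_integrable.integrableOn (a := s) (b := t)
  have hpos : 0 < ∫ u in s..t, phi u :=
    intervalIntegral.intervalIntegral_pos_of_pos
      phi_integrable.intervalIntegrable phi_pos hst
  rw [stdNormalCDF_eq, stdNormalCDF_eq, ← MeasureTheory.integral_Iic_eq_integral_Iio,
    ← MeasureTheory.integral_Iic_eq_integral_Iio]
  linarith

lemma stdNormalCDF_tendsto : Tendsto stdNormalCDF atTop (nhds 1) := by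
  have := MeasureTheory.tendsto_setIntegral_of_monotone (μ := volume)
    (s := fun t : ℝ => Set.Iio t) (f := phi)
    (fun t => measurableSet_Iio) (fun s t hst => Set.Iio_subset_Iio hst)
    (by rw [Set.iUnion_Iio]; exact phi_integrable.integrableOn)
  rw [Set.iUnion_Iio, MeasureTheory.setIntegral_univ, phi_integral] at this
  exact this

end aux

theorem BM_survival_probability_properties (μ σ Δ : ℝ) (hμ : 0 < μ) (hσ : 0 < σ)
    (hΔ : 0 < Δ) (h : ℝ → ℝ)
    (hh : h = fun x => stdNormalCDF ((x + μ * Δ) / (σ * Real.sqrt Δ))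
      - Real.exp (-2 * μ * x / σ ^ 2) * stdNormalCDF ((-x + μ * Δ) / (σ * Real.sqrt Δ))) :
    (∀ x : ℝ, 0 < x → h x ∈ Set.Ioo (0 : ℝ) 1) ∧ StrictMonoOn h (Set.Ici 0) ∧
      Tendsto h atTop (nhds 1) := by
  subst hh
  have hc0 : 0 < σ * Real.sqrt Δ := by positivity
  set c := σ * Real.sqrt Δ with hc
  refine ⟨?_, ?_, ?_⟩
  · intro x hx
    have hlt : (-x + μ * Δ) / c < (x + μ * Δ) / c := by
      apply div_lt_div_of_pos_right _ hc0
      linarith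
    have hN := stdNormalCDF_strictMono hlt
    have hNpos := stdNormalCDF_pos ((-x + μ * Δ) / c)
    have hNlt1 := stdNormalCDF_lt_one ((x + μ * Δ) / c)
    have he1 : Real.exp (-2 * μ * x / σ ^ 2) < 1 := by
      rw [Real.exp_lt_one_iff]
      have : (0:ℝ) < σ ^ 2 := by positivity
      apply div_neg_of_neg_of_pos _ this
      nlinarith
    have he0 : 0 < Real.exp (-2 * μ * x / σ ^ 2) := Real.exp_pos _
    constructor
    · have : Real.exp (-2 * μ * x / σ ^ 2) * stdNormalCDF ((-x + μ * Δ) / c)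
          < 1 * stdNormalCDF ((-x + μ * Δ) / c) :=
        mul_lt_mul_of_pos_right he1 hNpos
      simp only at *
      nlinarith
    · simp only
      nlinarith
  · intro x hx y hy hxy
    simp only
    have h1 : stdNormalCDF ((x + μ * Δ) / c) < stdNormalCDF ((y + μ * Δ) / c) := by
      apply stdNormalCDF_strictMono
      apply div_lt_div_of_pos_right _ hc0
      linarith
    have h2 : Real.exp (-2 * μ * y / σ ^ 2) * stdNormalCDF ((-y + μ * Δ) / c)
        ≤ Real.exp (-2 * μ * x / σ ^ 2) * stdNormalCDF ((-x + μ * Δ) / c) := by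
      apply mul_le_mul
      · rw [Real.exp_le_exp]
        rw [div_le_div_iff_of_pos_right (by positivity : (0:ℝ) < σ ^ 2)]
        nlinarith
      · apply (stdNormalCDF_strictMono.monotone)
        rw [div_le_div_iff_of_pos_right hc0]
        linarith
      · exact (stdNormalCDF_pos _).le
      · exact (Real.exp_pos _).le
    linarith
  · have T1 : Tendsto (fun x => stdNormalCDF ((x + μ * Δ) / c)) atTop (nhds 1) := by
      apply stdNormalCDF_tendsto.comp
      exact (tendsto_atTop_add_const_right atTop (μ * Δ) tendsto_id).atTop_div_const hc0
    have T2 : Tendsto (fun x => Real.exp (-2 * μ * x / σ ^ 2)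
        * stdNormalCDF ((-x + μ * Δ) / c)) atTop (nhds 0) := by
      apply squeeze_zero (g := fun x => Real.exp (-2 * μ * x / σ ^ 2))
      · intro x
        exact mul_nonneg (Real.exp_pos _).le (stdNormalCDF_pos _).le
      · intro x
        exact mul_le_of_le_one_right (Real.exp_pos _).le (stdNormalCDF_lt_one _).le
      · have harg : Tendsto (fun x : ℝ => -2 * μ * x / σ ^ 2) atTop atBot := by
          have heq : (fun x : ℝ => -2 * μ * x / σ ^ 2)
              = fun x : ℝ => -(x * (2 * μ / σ ^ 2)) := by
            funext x; field_simp
          rw [heq]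
          exact tendsto_neg_atTop_atBot.comp (tendsto_id.atTop_mul_const (by positivity))
        exact Real.tendsto_exp_atBot.comp harg
    have := T1.sub T2
    simpa using this
end
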